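/- arXiv:2009.13510 — 5 statements merged into one kernel-verified Lean document; each statement's English description precedes it below -/
import Mathlib

section
/- Let n ≥ 1 and let Y₁,…,Yₙ, Z, W be random variables, each taking finitely many values on a common finite probability space, such that Y₁,…,Yₙ are mutually conditionally independent given the pair (Z,W). Then ∑_{i=1}^{n} I(Yᵢ;Z|W) ≥ I((Y₁,…,Yₙ);Z|W). -/
open scoped Classical
open Finset

/-- Probability of an event `E` under a weight function `p` on a finite sample space. -/
noncomputable def prEv {Ω : Type*} [Fintype Ω] (p : Ω → ℝ) (E : Ω → Prop) : ℝ :=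
  ∑ ω, if E ω then p ω else 0

/-- Shannon entropy (base 2) of a random variable `X` on a finite probability space,
with the convention `0 · log₂ 0 = 0` (automatic since `Real.logb 2 0 = 0`). -/
noncomputable def ent {Ω S : Type*} [Fintype Ω] [Fintype S] (p : Ω → ℝ) (X : Ω → S) : ℝ :=
  -∑ s : S, prEv p (fun ω => X ω = s) * Real.logb 2 (prEv p (fun ω => X ω = s))

/-- Conditional Shannon entropy `H(X|Y)` (base 2). -/
noncomputable def condEnt {Ω S T : Type*} [Fintype Ω] [Fintype S] [Fintype T]
    (p : Ω → ℝ) (X : Ω → S) (Y : Ω → T) : ℝ :=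
  -∑ s : S, ∑ t : T, prEv p (fun ω => X ω = s ∧ Y ω = t) *
      Real.logb 2 (prEv p (fun ω => X ω = s ∧ Y ω = t) / prEv p (fun ω => Y ω = t))

/-- Mutual information `I(X;Y) = H(X) - H(X|Y)`. -/
noncomputable def mi {Ω S T : Type*} [Fintype Ω] [Fintype S] [Fintype T]
    (p : Ω → ℝ) (X : Ω → S) (Y : Ω → T) : ℝ :=
  ent p X - condEnt p X Y

/-- Conditional mutual information `I(X;Y|Z) = H(X|Z) - H(X|(Y,Z))`. -/
noncomputable def cmi {Ω S T U : Type*} [Fintype Ω] [Fintype S] [Fintype T] [Fintype U]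
    (p : Ω → ℝ) (X : Ω → S) (Y : Ω → T) (Z : Ω → U) : ℝ :=
  condEnt p X Z - condEnt p X (fun ω => (Y ω, Z ω))

section AuxPr

variable {Ω : Type*} [Fintype Ω]

lemma prEv_nonneg (p : Ω → ℝ) (hp : ∀ ω, 0 ≤ p ω) (E : Ω → Prop) : 0 ≤ prEv p E := by
  refine Finset.sum_nonneg fun ω _ => ?_
  split_ifs
  · exact hp ω
  · exact le_refl 0

lemma prEv_congr (p : Ω → ℝ) {E F : Ω → Prop} (h : ∀ ω, E ω ↔ F ω) :
    prEv p E = prEv p F := by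
  unfold prEv
  exact Finset.sum_congr rfl fun ω _ => by rw [h ω]

lemma prEv_mono (p : Ω → ℝ) (hp : ∀ ω, 0 ≤ p ω) {E F : Ω → Prop}
    (h : ∀ ω, E ω → F ω) : prEv p E ≤ prEv p F := by
  refine Finset.sum_le_sum fun ω _ => ?_
  by_cases hE : E ω
  · simp [hE, h ω hE]
  · simp only [hE, if_false]
    split_ifs
    · exact hp ω
    · exact le_refl 0

lemma prEv_false (p : Ω → ℝ) {E : Ω → Prop} (h : ∀ ω, ¬ E ω) : prEv p E = 0 := by
  unfold prEv
  exact Finset.sum_eq_zero fun ω _ => by simp [h ω]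

lemma prEv_partition {A : Type*} [Fintype A] (p : Ω → ℝ) (X : Ω → A) (E : Ω → Prop) :
    prEv p E = ∑ a, prEv p (fun ω => X ω = a ∧ E ω) := by
  unfold prEv
  rw [Finset.sum_comm]
  refine Finset.sum_congr rfl fun ω _ => ?_
  by_cases hE : E ω
  · simp only [hE, and_true, if_true]
    rw [show (∑ a, if X ω = a then p ω else 0) = if X ω ∈ Finset.univ then p ω else 0 from
      Finset.sum_ite_eq Finset.univ (X ω) (fun _ => p ω)]
    simp
  · simp [hE]

end AuxPr

/-- Gibbs' inequality (base-2 form). -/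
lemma gibbs_ineq {ι : Type*} [Fintype ι] (a b : ι → ℝ) (ha : ∀ i, 0 ≤ a i)
    (hb : ∀ i, 0 ≤ b i) (hpos : ∀ i, 0 < a i → 0 < b i)
    (hab : ∑ i, b i ≤ ∑ i, a i) :
    0 ≤ ∑ i, a i * (Real.logb 2 (a i) - Real.logb 2 (b i)) := by
  have key : ∀ i, a i - b i ≤ a i * (Real.log (a i) - Real.log (b i)) := by
    intro i
    rcases eq_or_lt_of_le (ha i) with h0 | h0
    · rw [← h0]
      simp
      exact hb i
    · have hbpos := hpos i h0
      have hlog := Real.log_le_sub_one_of_pos (show 0 < b i / a i from div_pos hbpos h0)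
      rw [Real.log_div (ne_of_gt hbpos) (ne_of_gt h0)] at hlog
      have h2 : a i * (Real.log (b i) - Real.log (a i)) ≤ a i * (b i / a i - 1) := by
        exact mul_le_mul_of_nonneg_left hlog (le_of_lt h0)
      have h3 : a i * (b i / a i - 1) = b i - a i := by field_simp
      nlinarith
  have hsum : ∑ i, (a i - b i) ≤ ∑ i, a i * (Real.log (a i) - Real.log (b i)) :=
    Finset.sum_le_sum fun i _ => key i
  rw [Finset.sum_sub_distrib] at hsum
  have h0 : (0:ℝ) ≤ ∑ i, a i * (Real.log (a i) - Real.log (b i)) := by linarith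
  have heq : ∑ i, a i * (Real.logb 2 (a i) - Real.logb 2 (b i))
      = (∑ i, a i * (Real.log (a i) - Real.log (b i))) / Real.log 2 := by
    rw [Finset.sum_div]
    refine Finset.sum_congr rfl fun i _ => ?_
    simp only [Real.logb]
    ring
  rw [heq]
  exact div_nonneg h0 (Real.log_nonneg (by norm_num))


section Main

open Finset

variable {Ω S A : Type*} [Fintype Ω] [Fintype S] [Fintype A]

/-- Joint probability of the tuple `Y` and conditioning variable `U`. -/
noncomputable def pJ {n : ℕ} (p : Ω → ℝ) (Y : Fin n → Ω → S) (U : Ω → A)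
    (y : Fin n → S) (u : A) : ℝ :=
  prEv p (fun ω => (fun i => Y i ω) = y ∧ U ω = u)

noncomputable def pI {n : ℕ} (p : Ω → ℝ) (Y : Fin n → Ω → S) (U : Ω → A)
    (i : Fin n) (s : S) (u : A) : ℝ :=
  prEv p (fun ω => Y i ω = s ∧ U ω = u)

noncomputable def pU (p : Ω → ℝ) (U : Ω → A) (u : A) : ℝ :=
  prEv p (fun ω => U ω = u)

variable {n : ℕ} (p : Ω → ℝ) (Y : Fin n → Ω → S) (U : Ω → A)

lemma pU_eq_sum_pJ (u : A) : pU p U u = ∑ y, pJ p Y U y u :=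
  prEv_partition p (fun ω i => Y i ω) _

lemma pU_eq_sum_pI (i : Fin n) (u : A) : pU p U u = ∑ s, pI p Y U i s u :=
  prEv_partition p (Y i) _

lemma pI_eq_sum_pJ (i : Fin n) (s : S) (u : A) :
    pI p Y U i s u = ∑ y, if y i = s then pJ p Y U y u else 0 := by
  rw [show pI p Y U i s u
      = ∑ y, prEv p (fun ω => (fun j => Y j ω) = y ∧ (Y i ω = s ∧ U ω = u)) from
    prEv_partition p (fun ω j => Y j ω) _]
  refine Finset.sum_congr rfl fun y _ => ?_
  by_cases hys : y i = s
  · rw [if_pos hys]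
    refine prEv_congr p fun ω => ?_
    constructor
    · rintro ⟨h1, _, h3⟩; exact ⟨h1, h3⟩
    · rintro ⟨h1, h3⟩
      refine ⟨h1, ?_, h3⟩
      rw [show Y i ω = (fun j => Y j ω) i from rfl, h1, hys]
  · rw [if_neg hys]
    refine prEv_false p fun ω => ?_
    rintro ⟨h1, h2, _⟩
    apply hys
    rw [← h2, show Y i ω = (fun j => Y j ω) i from rfl, h1]

lemma pJ_nonneg (hp : ∀ ω, 0 ≤ p ω) (y : Fin n → S) (u : A) : 0 ≤ pJ p Y U y u :=
  prEv_nonneg p hp _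

lemma pI_nonneg (hp : ∀ ω, 0 ≤ p ω) (i : Fin n) (s : S) (u : A) : 0 ≤ pI p Y U i s u :=
  prEv_nonneg p hp _

lemma pJ_le_pI (hp : ∀ ω, 0 ≤ p ω) (y : Fin n → S) (u : A) (i : Fin n) :
    pJ p Y U y u ≤ pI p Y U i (y i) u := by
  refine prEv_mono p hp fun ω h => ?_
  obtain ⟨h1, h2⟩ := h
  exact ⟨by rw [show Y i ω = (fun j => Y j ω) i from rfl, h1], h2⟩

lemma pJ_le_pU (hp : ∀ ω, 0 ≤ p ω) (y : Fin n → S) (u : A) :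
    pJ p Y U y u ≤ pU p U u :=
  prEv_mono p hp fun ω h => h.2

/-- Rewriting the conditional entropy of the joint tuple. -/
lemma condEnt_joint :
    condEnt p (fun ω i => Y i ω) U
      = -∑ y, ∑ u, pJ p Y U y u * Real.logb 2 (pJ p Y U y u / pU p U u) := rfl

/-- Rewriting the sum of individual conditional entropies. -/
lemma sum_condEnt_eq :
    ∑ i, condEnt p (Y i) U
      = -∑ y, ∑ u, pJ p Y U y u *
          ∑ i, Real.logb 2 (pI p Y U i (y i) u / pU p U u) := by
  have step : ∀ i : Fin n,
      condEnt p (Y i) U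
        = -∑ y, ∑ u, pJ p Y U y u * Real.logb 2 (pI p Y U i (y i) u / pU p U u) := by
    intro i
    have : (∑ s, ∑ u, pI p Y U i s u * Real.logb 2 (pI p Y U i s u / pU p U u))
        = ∑ y, ∑ u, pJ p Y U y u * Real.logb 2 (pI p Y U i (y i) u / pU p U u) := by
      calc (∑ s, ∑ u, pI p Y U i s u * Real.logb 2 (pI p Y U i s u / pU p U u))
          = ∑ s, ∑ u, ∑ y, (if y i = s then
              pJ p Y U y u * Real.logb 2 (pI p Y U i s u / pU p U u) else 0) := by
            refine Finset.sum_congr rfl fun s _ => Finset.sum_congr rfl fun u _ => ?_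
            rw [pI_eq_sum_pJ, Finset.sum_mul]
            exact Finset.sum_congr rfl fun y _ => by split_ifs <;> simp
        _ = ∑ y, ∑ u, ∑ s, (if y i = s then
              pJ p Y U y u * Real.logb 2 (pI p Y U i s u / pU p U u) else 0) := by
            calc ∑ s, ∑ u, ∑ y, (if y i = s then
                  pJ p Y U y u * Real.logb 2 (pI p Y U i s u / pU p U u) else 0)
                = ∑ s, ∑ y, ∑ u, (if y i = s then
                  pJ p Y U y u * Real.logb 2 (pI p Y U i s u / pU p U u) else 0) :=
                  Finset.sum_congr rfl fun s _ => Finset.sum_comm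
              _ = ∑ y, ∑ s, ∑ u, (if y i = s then
                  pJ p Y U y u * Real.logb 2 (pI p Y U i s u / pU p U u) else 0) :=
                  Finset.sum_comm
              _ = ∑ y, ∑ u, ∑ s, (if y i = s then
                  pJ p Y U y u * Real.logb 2 (pI p Y U i s u / pU p U u) else 0) :=
                  Finset.sum_congr rfl fun y _ => Finset.sum_comm
        _ = ∑ y, ∑ u, pJ p Y U y u * Real.logb 2 (pI p Y U i (y i) u / pU p U u) := by
            refine Finset.sum_congr rfl fun y _ => Finset.sum_congr rfl fun u _ => ?_
            rw [Finset.sum_ite_eq Finset.univ (y i)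
              (fun s => pJ p Y U y u * Real.logb 2 (pI p Y U i s u / pU p U u))]
            simp
    rw [show condEnt p (Y i) U = -∑ s, ∑ u, pI p Y U i s u *
        Real.logb 2 (pI p Y U i s u / pU p U u) from rfl, this]
  rw [Finset.sum_congr rfl fun i _ => step i, Finset.sum_neg_distrib, neg_inj]
  calc ∑ i, ∑ y, ∑ u, pJ p Y U y u * Real.logb 2 (pI p Y U i (y i) u / pU p U u)
      = ∑ y, ∑ i, ∑ u, pJ p Y U y u * Real.logb 2 (pI p Y U i (y i) u / pU p U u) :=
        Finset.sum_comm
    _ = ∑ y, ∑ u, ∑ i, pJ p Y U y u * Real.logb 2 (pI p Y U i (y i) u / pU p U u) :=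
        Finset.sum_congr rfl fun y _ => Finset.sum_comm
    _ = ∑ y, ∑ u, pJ p Y U y u * ∑ i, Real.logb 2 (pI p Y U i (y i) u / pU p U u) :=
        Finset.sum_congr rfl fun y _ => Finset.sum_congr rfl fun u _ =>
          (Finset.mul_sum _ _ _).symm


set_option maxHeartbeats 2000000 in
/-- Subadditivity of conditional entropy: `H(Y₁,…,Yₙ | U) ≤ ∑ H(Yᵢ|U)`. -/
lemma condEnt_joint_le (hp : ∀ ω, 0 ≤ p ω) :
    condEnt p (fun ω i => Y i ω) U ≤ ∑ i, condEnt p (Y i) U := by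
  rw [condEnt_joint, sum_condEnt_eq]
  refine neg_le_neg ?_
  have keyu : ∀ u : A,
      (∑ y, pJ p Y U y u * ∑ i, Real.logb 2 (pI p Y U i (y i) u / pU p U u))
        ≤ ∑ y, pJ p Y U y u * Real.logb 2 (pJ p Y U y u / pU p U u) := by
    intro u
    by_cases hu : pU p U u = 0
    · have hPj0 : ∀ y, pJ p Y U y u = 0 := fun y =>
        le_antisymm (hu ▸ pJ_le_pU p Y U hp y u) (pJ_nonneg p Y U hp y u)
      simp [hPj0]
    · have hupos : 0 < pU p U u :=
        lt_of_le_of_ne (prEv_nonneg p hp _) (Ne.symm hu)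
      set a : (Fin n → S) → ℝ := fun y => pJ p Y U y u / pU p U u with ha_def
      set b : (Fin n → S) → ℝ := fun y => ∏ i, pI p Y U i (y i) u / pU p U u with hb_def
      have ha : ∀ y, 0 ≤ a y := fun y =>
        div_nonneg (pJ_nonneg p Y U hp y u) (le_of_lt hupos)
      have hb : ∀ y, 0 ≤ b y := fun y =>
        Finset.prod_nonneg fun i _ =>
          div_nonneg (pI_nonneg p Y U hp i (y i) u) (le_of_lt hupos)
      have hpos : ∀ y, 0 < a y → 0 < b y := by
        intro y hay
        have hPjpos : 0 < pJ p Y U y u := by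
          have := mul_pos hay hupos
          rwa [ha_def, div_mul_cancel₀ _ hu] at this
        exact Finset.prod_pos fun i _ =>
          div_pos (lt_of_lt_of_le hPjpos (pJ_le_pI p Y U hp y u i)) hupos
      have hsa : ∑ y, a y = 1 := by
        rw [ha_def, ← Finset.sum_div, ← pU_eq_sum_pJ, div_self hu]
      have hsb : ∑ y, b y = 1 := by
        have hps := Finset.prod_univ_sum (fun _ : Fin n => (Finset.univ : Finset S))
          (fun i s => pI p Y U i s u / pU p U u)
        rw [Fintype.piFinset_univ] at hps
        rw [hb_def, ← hps]
        exact Finset.prod_eq_one fun i _ => by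
          rw [← Finset.sum_div, ← pU_eq_sum_pI, div_self hu]
      have hgibbs : 0 ≤ ∑ y, a y * (Real.logb 2 (a y) - Real.logb 2 (b y)) :=
        gibbs_ineq a b ha hb hpos (le_of_eq (hsb.trans hsa.symm))
      have hterm : ∀ y,
          pJ p Y U y u * Real.logb 2 (pJ p Y U y u / pU p U u)
            - pJ p Y U y u * ∑ i, Real.logb 2 (pI p Y U i (y i) u / pU p U u)
          = pU p U u * (a y * (Real.logb 2 (a y) - Real.logb 2 (b y))) := by
        intro y
        by_cases hPj : pJ p Y U y u = 0
        · simp [hPj, ha_def, zero_div]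
        · have hPjpos : 0 < pJ p Y U y u :=
            lt_of_le_of_ne (pJ_nonneg p Y U hp y u) (Ne.symm hPj)
          have hlogb : ∑ i, Real.logb 2 (pI p Y U i (y i) u / pU p U u)
              = Real.logb 2 (b y) := by
            rw [hb_def]
            exact (Real.logb_prod Finset.univ _ (fun i _ =>
              ne_of_gt (div_pos (lt_of_lt_of_le hPjpos (pJ_le_pI p Y U hp y u i))
                hupos))).symm
          have hPu_a : pU p U u * a y = pJ p Y U y u := by
            rw [ha_def]; field_simp
          rw [hlogb, show Real.logb 2 (pJ p Y U y u / pU p U u) = Real.logb 2 (a y) from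
            by rw [ha_def], ← hPu_a]
          ring
      have hfin : 0 ≤ ∑ y, (pJ p Y U y u * Real.logb 2 (pJ p Y U y u / pU p U u)
          - pJ p Y U y u * ∑ i, Real.logb 2 (pI p Y U i (y i) u / pU p U u)) := by
        rw [Finset.sum_congr rfl fun y _ => hterm y, ← Finset.mul_sum]
        exact mul_nonneg (le_of_lt hupos) hgibbs
      rw [Finset.sum_sub_distrib] at hfin
      linarith
  calc ∑ y, ∑ u, pJ p Y U y u * ∑ i, Real.logb 2 (pI p Y U i (y i) u / pU p U u)
      = ∑ u, ∑ y, pJ p Y U y u * ∑ i, Real.logb 2 (pI p Y U i (y i) u / pU p U u) :=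
        Finset.sum_comm
    _ ≤ ∑ u, ∑ y, pJ p Y U y u * Real.logb 2 (pJ p Y U y u / pU p U u) :=
        Finset.sum_le_sum fun u _ => keyu u
    _ = ∑ y, ∑ u, pJ p Y U y u * Real.logb 2 (pJ p Y U y u / pU p U u) :=
        Finset.sum_comm

set_option maxHeartbeats 2000000 in
/-- Additivity of conditional entropy under conditional independence. -/
lemma condEnt_joint_eq (hp : ∀ ω, 0 ≤ p ω)
    (hci' : ∀ y u, 0 < pU p U u →
      pJ p Y U y u / pU p U u = ∏ i, pI p Y U i (y i) u / pU p U u) :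
    condEnt p (fun ω i => Y i ω) U = ∑ i, condEnt p (Y i) U := by
  rw [condEnt_joint, sum_condEnt_eq, neg_inj]
  refine Finset.sum_congr rfl fun y _ => Finset.sum_congr rfl fun u _ => ?_
  by_cases hPj : pJ p Y U y u = 0
  · simp [hPj]
  · have hPjpos : 0 < pJ p Y U y u :=
      lt_of_le_of_ne (pJ_nonneg p Y U hp y u) (Ne.symm hPj)
    have hupos : 0 < pU p U u := lt_of_lt_of_le hPjpos (pJ_le_pU p Y U hp y u)
    congr 1
    rw [hci' y u hupos]
    exact Real.logb_prod Finset.univ _ fun i _ =>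
      ne_of_gt (div_pos (lt_of_lt_of_le hPjpos (pJ_le_pI p Y U hp y u i)) hupos)

end Main

set_option maxHeartbeats 2000000 in
/-- If `Y₁,…,Yₙ` are mutually conditionally independent given `(Z,W)`, then
`∑ᵢ I(Yᵢ;Z|W) ≥ I((Y₁,…,Yₙ);Z|W)`. -/
theorem sum_condMutualInfo_ge_of_condIndep
    {Ω S T V : Type*} [Fintype Ω] [Fintype S] [Fintype T] [Fintype V]
    (n : ℕ) (hn : 1 ≤ n)
    (p : Ω → ℝ) (hp : ∀ ω, 0 ≤ p ω) (hsum : ∑ ω, p ω = 1)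
    (Y : Fin n → Ω → S) (Z : Ω → T) (W : Ω → V)
    (hci : ∀ (y : Fin n → S) (z : T) (w : V),
      0 < prEv p (fun ω => Z ω = z ∧ W ω = w) →
      prEv p (fun ω => (∀ i, Y i ω = y i) ∧ (Z ω = z ∧ W ω = w)) /
          prEv p (fun ω => Z ω = z ∧ W ω = w) =
        ∏ i, (prEv p (fun ω => Y i ω = y i ∧ (Z ω = z ∧ W ω = w)) /
          prEv p (fun ω => Z ω = z ∧ W ω = w))) :
    ∑ i, cmi p (Y i) Z W ≥ cmi p (fun ω => fun i => Y i ω) Z W := by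
  set ZW : Ω → T × V := fun ω => (Z ω, W ω) with hZW
  have hci' : ∀ (y : Fin n → S) (u : T × V), 0 < pU p ZW u →
      pJ p Y ZW y u / pU p ZW u = ∏ i, pI p Y ZW i (y i) u / pU p ZW u := by
    rintro y ⟨z, w⟩ hpos
    have e1 : pU p ZW (z, w) = prEv p (fun ω => Z ω = z ∧ W ω = w) :=
      prEv_congr p fun ω => by simp [hZW, Prod.ext_iff]
    have e2 : pJ p Y ZW y (z, w)
        = prEv p (fun ω => (∀ i, Y i ω = y i) ∧ (Z ω = z ∧ W ω = w)) :=
      prEv_congr p fun ω => by simp [hZW, Prod.ext_iff, funext_iff]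
    have e3 : ∀ i, pI p Y ZW i (y i) (z, w)
        = prEv p (fun ω => Y i ω = y i ∧ (Z ω = z ∧ W ω = w)) := fun i =>
      prEv_congr p fun ω => by simp [hZW, Prod.ext_iff]
    rw [e1] at hpos ⊢
    rw [e2]
    rw [Finset.prod_congr rfl fun i _ => by rw [e3 i]]
    exact hci y z w hpos
  have h1 : condEnt p (fun ω i => Y i ω) W ≤ ∑ i, condEnt p (Y i) W :=
    condEnt_joint_le p Y W hp
  have h2 : condEnt p (fun ω i => Y i ω) ZW = ∑ i, condEnt p (Y i) ZW :=
    condEnt_joint_eq p Y ZW hp hci'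
  simp only [cmi, ge_iff_le, ← hZW]
  rw [Finset.sum_sub_distrib]
  linarith
end

section
/- Let P, P', Q', Q be probability measures on a common measurable space, let ε ≥ 0 and δ, δ' ≥ 0. If P ≈_{0,δ'} P', P' ≈_{ε,δ} Q', and Q' ≈_{0,δ'} Q, then P ≈_{ε, (e^ε+1)·δ' + δ} Q. -/
open MeasureTheory ProbabilityTheory

/-- `(ε,δ)`-closeness of two measures: for every measurable event `T`,
`P(T) ≤ e^ε·Q(T) + δ` and `Q(T) ≤ e^ε·P(T) + δ`. -/
def DPClose {α : Type*} [MeasurableSpace α] (ε δ : ℝ) (P Q : Measure α) : Prop :=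
  ∀ T : Set α, MeasurableSet T →
    (P T).toReal ≤ Real.exp ε * (Q T).toReal + δ ∧
    (Q T).toReal ≤ Real.exp ε * (P T).toReal + δ

/-- If `P ≈_{0,δ'} P'`, `P' ≈_{ε,δ} Q'` and `Q' ≈_{0,δ'} Q`, then
`P ≈_{ε,(e^ε+1)·δ'+δ} Q`. -/
theorem dpClose_sandwich {α : Type*} [MeasurableSpace α]
    (P P' Q' Q : Measure α)
    [IsProbabilityMeasure P] [IsProbabilityMeasure P']
    [IsProbabilityMeasure Q'] [IsProbabilityMeasure Q]
    (ε δ δ' : ℝ) (hε : 0 ≤ ε) (hδ : 0 ≤ δ) (hδ' : 0 ≤ δ')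
    (h1 : DPClose 0 δ' P P') (h2 : DPClose ε δ P' Q') (h3 : DPClose 0 δ' Q' Q) :
    DPClose ε ((Real.exp ε + 1) * δ' + δ) P Q := by
  intro T hT
  obtain ⟨a1, a2⟩ := h1 T hT
  obtain ⟨b1, b2⟩ := h2 T hT
  obtain ⟨c1, c2⟩ := h3 T hT
  simp only [Real.exp_zero, one_mul] at a1 a2 c1 c2
  have he : (1:ℝ) ≤ Real.exp ε := Real.one_le_exp hε
  constructor <;> nlinarith
end

section
/- Let μ, ν be probability measures on a measurable space α with μ ≈_{ε,δ} ν, and let κ be a Markov kernel from α to a measurable space β. Then the measures obtained by post-processing, μ.bind(κ) and ν.bind(κ) (i.e., the measures T ↦ ∫ κ(a)(T) dμ(a) and T ↦ ∫ κ(a)(T) dν(a)), satisfy μ.bind(κ) ≈_{ε,δ} ν.bind(κ). -/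
open MeasureTheory ProbabilityTheory Set

private lemma dp_key {α β : Type*} [MeasurableSpace α] [MeasurableSpace β]
    (μ ν : Measure α) [IsProbabilityMeasure μ] [IsProbabilityMeasure ν]
    (ε δ : ℝ) (hδ : 0 ≤ δ)
    (h : ∀ T : Set α, MeasurableSet T →
      (μ T).toReal ≤ Real.exp ε * (ν T).toReal + δ)
    (κ : Kernel α β) [IsMarkovKernel κ] (T : Set β) (hT : MeasurableSet T) :
    ((μ.bind fun a => κ a) T).toReal ≤
      Real.exp ε * ((ν.bind fun a => κ a) T).toReal + δ := by
  set f : α → ℝ := fun a => (κ a T).toReal with hf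
  have hfm : Measurable f := (κ.measurable_coe hT).ennreal_toReal
  have hf01 : ∀ a, 0 ≤ f a ∧ f a ≤ 1 := by
    intro a
    refine ⟨ENNReal.toReal_nonneg, ?_⟩
    have h1 : κ a T ≤ 1 := prob_le_one
    simpa using ENNReal.toReal_mono (by simp) h1
  have hof : ∀ a, ENNReal.ofReal (f a) = κ a T := fun a =>
    ENNReal.ofReal_toReal (measure_ne_top _ _)
  have hSm : ∀ t : ℝ, MeasurableSet {a | t < f a} := fun t =>
    measurableSet_lt measurable_const hfm
  have layer : ∀ (P : Measure α),
      (P.bind fun a => κ a) T = ∫⁻ t in Ioc (0:ℝ) 1, P {a | t < f a} := by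
    intro P
    rw [Measure.bind_apply hT κ.measurable.aemeasurable]
    have h1 : ∫⁻ a, κ a T ∂P = ∫⁻ a, ENNReal.ofReal (f a) ∂P := by
      simp [hof]
    rw [h1, lintegral_eq_lintegral_meas_lt P
      (Filter.Eventually.of_forall fun a => (hf01 a).1) hfm.aemeasurable]
    have hsplit : (Ioi (0:ℝ)) = Ioc (0:ℝ) 1 ∪ Ioi 1 := (Ioc_union_Ioi_eq_Ioi zero_le_one).symm
    rw [hsplit, lintegral_union measurableSet_Ioi Ioc_disjoint_Ioi_same]
    have hz : ∫⁻ t in Ioi (1:ℝ), P {a | t < f a} = 0 := by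
      rw [setLIntegral_congr_fun measurableSet_Ioi
        (fun t (ht : t ∈ Ioi (1:ℝ)) => ?_), lintegral_zero]
      have : {a | t < f a} = ∅ := by
        ext a
        simp only [mem_setOf_eq, mem_empty_iff_false, iff_false, not_lt]
        exact (hf01 a).2.trans (le_of_lt ht)
      simp [this]
    rw [hz, add_zero]
  have hbound : (μ.bind fun a => κ a) T ≤
      ENNReal.ofReal (Real.exp ε) * ((ν.bind fun a => κ a) T) + ENNReal.ofReal δ := by
    rw [layer μ, layer ν]
    calc ∫⁻ t in Ioc (0:ℝ) 1, μ {a | t < f a}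
        ≤ ∫⁻ t in Ioc (0:ℝ) 1,
            (ENNReal.ofReal (Real.exp ε) * ν {a | t < f a} + ENNReal.ofReal δ) := by
          refine lintegral_mono fun t => ?_
          have h2 := h _ (hSm t)
          calc μ {a | t < f a} = ENNReal.ofReal (μ {a | t < f a}).toReal := by
                rw [ENNReal.ofReal_toReal (measure_ne_top _ _)]
            _ ≤ ENNReal.ofReal (Real.exp ε * (ν {a | t < f a}).toReal + δ) :=
                ENNReal.ofReal_le_ofReal h2
            _ ≤ ENNReal.ofReal (Real.exp ε * (ν {a | t < f a}).toReal) + ENNReal.ofReal δ :=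
                ENNReal.ofReal_add_le
            _ = ENNReal.ofReal (Real.exp ε) * ν {a | t < f a} + ENNReal.ofReal δ := by
                rw [ENNReal.ofReal_mul (Real.exp_nonneg ε),
                  ENNReal.ofReal_toReal (measure_ne_top _ _)]
      _ = ENNReal.ofReal (Real.exp ε) * (∫⁻ t in Ioc (0:ℝ) 1, ν {a | t < f a})
            + ENNReal.ofReal δ := by
          have hmono : Antitone fun t : ℝ => ν {a | t < f a} := by
            intro s t hst
            exact measure_mono fun a (ha : t < f a) => lt_of_le_of_lt hst ha
          rw [lintegral_add_right _ measurable_const,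
            lintegral_const_mul _ hmono.measurable, setLIntegral_const]
          simp
  haveI : IsProbabilityMeasure (ν.bind fun a => κ a) := by
    constructor
    rw [Measure.bind_apply MeasurableSet.univ κ.measurable.aemeasurable]
    simp
  have hfin : ENNReal.ofReal (Real.exp ε) * ((ν.bind fun a => κ a) T) + ENNReal.ofReal δ ≠ ⊤ :=
     ENNReal.add_ne_top.2 ⟨ENNReal.mul_ne_top ENNReal.ofReal_ne_top (measure_ne_top _ _),
      ENNReal.ofReal_ne_top⟩
  have := ENNReal.toReal_mono hfin hbound
  rwa [ENNReal.toReal_add (ENNReal.mul_ne_top ENNReal.ofReal_ne_top (measure_ne_top _ _))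
    ENNReal.ofReal_ne_top, ENNReal.toReal_mul, ENNReal.toReal_ofReal (Real.exp_nonneg ε),
    ENNReal.toReal_ofReal hδ] at this


/-- `(ε,δ)`-closeness is preserved under post-processing by a
Markov kernel: if `μ ≈_{ε,δ} ν` then `μ.bind κ ≈_{ε,δ} ν.bind κ`. -/
theorem dpClose_postprocess {α β : Type*} [MeasurableSpace α] [MeasurableSpace β]
    (μ ν : Measure α) [IsProbabilityMeasure μ] [IsProbabilityMeasure ν]
    (ε δ : ℝ) (hε : 0 ≤ ε) (hδ : 0 ≤ δ)
    (h : DPClose ε δ μ ν)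
    (κ : Kernel α β) [IsMarkovKernel κ] :
    DPClose ε δ (μ.bind fun a => κ a) (ν.bind fun a => κ a) := by
  intro T hT
  exact ⟨dp_key μ ν ε δ hδ (fun S hS => (h S hS).1) κ T hT,
    dp_key ν μ ε δ hδ (fun S hS => (h S hS).2) κ T hT⟩
end

section
/- Let μ, ν be probability measures on a measurable space α with μ ≈_{ε₁,δ₁} ν, and let κ, λ be Markov kernels from α to a measurable space β such that κ(a) ≈_{ε₂,δ₂} λ(a) for every a ∈ α. Then the joint measures μ ⊗ κ and ν ⊗ λ on α × β (given by (μ ⊗ κ)(T) = ∫ κ(a)({b : (a,b) ∈ T}) dμ(a), and analogously for ν ⊗ λ) satisfy μ ⊗ κ ≈_{ε₁+ε₂, δ₁+δ₂} ν ⊗ λ. -/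
open MeasureTheory ProbabilityTheory

section Aux

open Set

variable {α : Type*} [MeasurableSpace α]

/-- Lift event-level one-sided closeness to integrals of `[0,1]`-valued functions,
via the layer cake formula. -/
lemma integral_le_of_dp {P Q : Measure α} [IsProbabilityMeasure P] [IsProbabilityMeasure Q]
    {ε δ : ℝ} (h : ∀ T : Set α, MeasurableSet T →
      (P T).toReal ≤ Real.exp ε * (Q T).toReal + δ)
    {f : α → ℝ} (hf : Measurable f) (h0 : ∀ a, 0 ≤ f a) (h1 : ∀ a, f a ≤ 1) :
    ∫ a, f a ∂P ≤ Real.exp ε * ∫ a, f a ∂Q + δ := by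
  have hbound : ∀ (R : Measure α) [IsProbabilityMeasure R], Integrable f R := by
    intro R _
    refine Integrable.mono' (integrable_const 1) hf.aestronglyMeasurable ?_
    exact Filter.Eventually.of_forall (fun a => by
      rw [Real.norm_eq_abs, abs_of_nonneg (h0 a)]; exact h1 a)
  have hP := (hbound P).integral_eq_integral_Ioc_meas_le (M := 1)
    (Filter.Eventually.of_forall h0) (Filter.Eventually.of_forall h1)
  have hQ := (hbound Q).integral_eq_integral_Ioc_meas_le (M := 1)
    (Filter.Eventually.of_forall h0) (Filter.Eventually.of_forall h1)
  rw [hP, hQ]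
  -- the two tail-probability functions
  set FP : ℝ → ℝ := fun t => (P {a | t ≤ f a}).toReal with hFP
  set FQ : ℝ → ℝ := fun t => (Q {a | t ≤ f a}).toReal with hFQ
  have hmeas : ∀ (R : Measure α), Measurable (fun t : ℝ => (R {a | t ≤ f a}).toReal) := by
    intro R
    refine Measurable.ennreal_toReal ?_
    exact Antitone.measurable (fun s t hst => measure_mono (fun a ha => hst.trans ha))
  have hintOn : ∀ (R : Measure α) [IsProbabilityMeasure R],
      IntegrableOn (fun t : ℝ => (R {a | t ≤ f a}).toReal) (Ioc (0:ℝ) 1) := by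
    intro R _
    refine Integrable.mono' (integrable_const 1) ((hmeas R).aestronglyMeasurable) ?_
    refine Filter.Eventually.of_forall (fun t => ?_)
    rw [Real.norm_eq_abs, abs_of_nonneg ENNReal.toReal_nonneg]
    exact ENNReal.toReal_le_of_le_ofReal zero_le_one (by simpa using prob_le_one)
  have key : ∫ t in Ioc (0:ℝ) 1, FP t ≤ ∫ t in Ioc (0:ℝ) 1, (Real.exp ε * FQ t + δ) := by
    refine setIntegral_mono_on (hintOn P) ?_ measurableSet_Ioc (fun t _ => ?_)
    · exact ((hintOn Q).const_mul _).add (integrableOn_const (by simp))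
    · exact h _ (hf measurableSet_Ici)
  refine key.trans ?_
  rw [integral_add ((hintOn Q).const_mul _) (integrableOn_const (by simp)),
    integral_const_mul, setIntegral_const]
  simp [Real.volume_Ioc, hFQ, Measure.real]

end Aux

/-- One-sided composition bound. -/
lemma compProd_le_of_dp {α β : Type*} [MeasurableSpace α] [MeasurableSpace β]
    (μ ν : Measure α) [IsProbabilityMeasure μ] [IsProbabilityMeasure ν]
    (κ ξ : Kernel α β) [IsMarkovKernel κ] [IsMarkovKernel ξ]
    (ε₁ ε₂ δ₁ δ₂ : ℝ) (hδ₂ : 0 ≤ δ₂)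
    (h1 : ∀ T : Set α, MeasurableSet T → (μ T).toReal ≤ Real.exp ε₁ * (ν T).toReal + δ₁)
    (h2 : ∀ a : α, ∀ S : Set β, MeasurableSet S →
      ((κ a) S).toReal ≤ Real.exp ε₂ * ((ξ a) S).toReal + δ₂)
    {T : Set (α × β)} (hT : MeasurableSet T) :
    ((μ.compProd κ) T).toReal ≤
      Real.exp (ε₁ + ε₂) * ((ν.compProd ξ) T).toReal + (δ₁ + δ₂) := by
  set f : α → ℝ := fun a => ((κ a) (Prod.mk a ⁻¹' T)).toReal with hf
  set g : α → ℝ := fun a => ((ξ a) (Prod.mk a ⁻¹' T)).toReal with hg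
  have hfm : Measurable f := (Kernel.measurable_kernel_prodMk_left hT).ennreal_toReal
  have hgm : Measurable g := (Kernel.measurable_kernel_prodMk_left hT).ennreal_toReal
  have hf0 : ∀ a, 0 ≤ f a := fun a => ENNReal.toReal_nonneg
  have hg0 : ∀ a, 0 ≤ g a := fun a => ENNReal.toReal_nonneg
  have hf1 : ∀ a, f a ≤ 1 := fun a =>
    ENNReal.toReal_le_of_le_ofReal zero_le_one (by simpa using prob_le_one)
  have hg1 : ∀ a, g a ≤ 1 := fun a =>
    ENNReal.toReal_le_of_le_ofReal zero_le_one (by simpa using prob_le_one)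
  -- express both sides as integrals
  have hμκ : ((μ.compProd κ) T).toReal = ∫ a, f a ∂μ := by
    rw [Measure.compProd_apply hT]
    rw [integral_toReal (Kernel.measurable_kernel_prodMk_left hT).aemeasurable
      (Filter.Eventually.of_forall (fun a => measure_lt_top _ _))]
  have hνξ : ((ν.compProd ξ) T).toReal = ∫ a, g a ∂ν := by
    rw [Measure.compProd_apply hT]
    rw [integral_toReal (Kernel.measurable_kernel_prodMk_left hT).aemeasurable
      (Filter.Eventually.of_forall (fun a => measure_lt_top _ _))]
  rw [hμκ, hνξ]
  set h : α → ℝ := fun a => max (f a - δ₂) 0 with hh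
  have hhm : Measurable h := (hfm.sub measurable_const).max measurable_const
  have hh0 : ∀ a, 0 ≤ h a := fun a => le_max_right _ _
  have hh1 : ∀ a, h a ≤ 1 := fun a =>
    max_le (by linarith [hf1 a]) zero_le_one
  have hfh : ∀ a, f a ≤ h a + δ₂ := fun a => by
    have := le_max_left (f a - δ₂) 0
    linarith
  have hhg : ∀ a, h a ≤ Real.exp ε₂ * g a := fun a =>
    max_le (by linarith [h2 a (Prod.mk a ⁻¹' T) (hT.preimage (measurable_prodMk_left (x := a)))])
      (mul_nonneg (Real.exp_pos _).le (hg0 a))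
  have hint : ∀ (R : Measure α) [IsProbabilityMeasure R] (u : α → ℝ),
      Measurable u → (∀ a, 0 ≤ u a) → (∀ a, u a ≤ 1) → Integrable u R := by
    intro R _ u hu h0 h1
    refine Integrable.mono' (integrable_const 1) hu.aestronglyMeasurable ?_
    exact Filter.Eventually.of_forall (fun a => by
      rw [Real.norm_eq_abs, abs_of_nonneg (h0 a)]; exact h1 a)
  have step1 : ∫ a, f a ∂μ ≤ (∫ a, h a ∂μ) + δ₂ := by
    have : ∫ a, f a ∂μ ≤ ∫ a, (h a + δ₂) ∂μ :=
      integral_mono (hint μ f hfm hf0 hf1)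
        ((hint μ h hhm hh0 hh1).add (integrable_const _)) hfh
    rwa [integral_add (hint μ h hhm hh0 hh1) (integrable_const _), integral_const,
      probReal_univ, one_smul] at this
  have step2 : ∫ a, h a ∂μ ≤ Real.exp ε₁ * ∫ a, h a ∂ν + δ₁ :=
    integral_le_of_dp h1 hhm hh0 hh1
  have step3 : ∫ a, h a ∂ν ≤ Real.exp ε₂ * ∫ a, g a ∂ν := by
    rw [← integral_const_mul]
    exact integral_mono (hint ν h hhm hh0 hh1)
      ((hint ν g hgm hg0 hg1).const_mul _) hhg
  have hexp : (0:ℝ) < Real.exp ε₁ := Real.exp_pos _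
  have : ∫ a, f a ∂μ ≤ Real.exp ε₁ * (Real.exp ε₂ * ∫ a, g a ∂ν) + δ₁ + δ₂ := by
    nlinarith [mul_le_mul_of_nonneg_left step3 hexp.le]
  calc ∫ a, f a ∂μ ≤ Real.exp ε₁ * (Real.exp ε₂ * ∫ a, g a ∂ν) + δ₁ + δ₂ := this
    _ = Real.exp (ε₁ + ε₂) * ∫ a, g a ∂ν + (δ₁ + δ₂) := by
        rw [Real.exp_add]; ring

/-- Composition of `(ε,δ)`-closeness: if `μ ≈_{ε₁,δ₁} ν` and
`κ a ≈_{ε₂,δ₂} ξ a` for every `a`, then `μ ⊗ κ ≈_{ε₁+ε₂,δ₁+δ₂} ν ⊗ ξ`. -/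
theorem dpClose_compProd {α β : Type*} [MeasurableSpace α] [MeasurableSpace β]
    (μ ν : Measure α) [IsProbabilityMeasure μ] [IsProbabilityMeasure ν]
    (κ ξ : Kernel α β) [IsMarkovKernel κ] [IsMarkovKernel ξ]
    (ε₁ ε₂ δ₁ δ₂ : ℝ) (hε₁ : 0 ≤ ε₁) (hε₂ : 0 ≤ ε₂) (hδ₁ : 0 ≤ δ₁) (hδ₂ : 0 ≤ δ₂)
    (h1 : DPClose ε₁ δ₁ μ ν) (h2 : ∀ a : α, DPClose ε₂ δ₂ (κ a) (ξ a)) :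
    DPClose (ε₁ + ε₂) (δ₁ + δ₂) (μ.compProd κ) (ν.compProd ξ) := by
  intro T hT
  constructor
  · exact compProd_le_of_dp μ ν κ ξ ε₁ ε₂ δ₁ δ₂ hδ₂
      (fun S hS => (h1 S hS).1) (fun a S hS => ((h2 a) S hS).1) hT
  · exact compProd_le_of_dp ν μ ξ κ ε₁ ε₂ δ₁ δ₂ hδ₂
      (fun S hS => (h1 S hS).2) (fun a S hS => ((h2 a) S hS).2) hT
end

section
/- Let m, n, k be positive integers with m ≤ n and m ≥ 2k. Let X be a random variable taking values in {0,1}^n with Pr[X = x] ≤ 2^{−m} for every x ∈ {0,1}^n. Let ℋ be a finite pairwise independent family of hash functions from {0,1}^n to {0,1}^{m−2k}, let h be uniformly distributed on ℋ and independent of X, and let U be uniformly distributed on {0,1}^{m−2k} and independent of h. Then the statistical distance between the joint distributions of (h(X), h) and (U, h) is at most 2^{−k}. -/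
open scoped Classical
open Finset

/-- left-over hash lemma: if `X` is a random variable on `{0,1}ⁿ`
with `Pr[X = x] ≤ 2^{−m}` for all `x`, `H` is a pairwise independent family of hash
functions from `{0,1}ⁿ` to `{0,1}^{m−2k}`, `h` is uniform on `H` and independent of `X`,
and `U` is uniform on `{0,1}^{m−2k}` and independent of `h`, then the statistical
distance between the distributions of `(h(X), h)` and `(U, h)` is at most `2^{−k}`. -/
theorem leftover_hash_lemma (m n k : ℕ) (hm : 1 ≤ m) (hn : 1 ≤ n) (hk : 1 ≤ k)
    (hmn : m ≤ n) (hkm : 2 * k ≤ m)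
    (H : Type*) [Fintype H] [Nonempty H]
    (eval : H → (Fin n → Bool) → (Fin (m - 2 * k) → Bool))
    (hpair : ∀ x₁ x₂ : Fin n → Bool, x₁ ≠ x₂ →
      ∀ y₁ y₂ : Fin (m - 2 * k) → Bool,
        ((univ.filter fun h : H => eval h x₁ = y₁ ∧ eval h x₂ = y₂).card : ℝ) /
            (Fintype.card H : ℝ) =
          1 / ((Fintype.card (Fin (m - 2 * k) → Bool) : ℝ)) ^ 2)
    (pX : (Fin n → Bool) → ℝ) (hpos : ∀ x, 0 ≤ pX x) (hsum : ∑ x, pX x = 1)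
    (hbound : ∀ x, pX x ≤ 2 ^ (-(m : ℝ))) :
    (1 / 2) * ∑ y : Fin (m - 2 * k) → Bool, ∑ h : H,
        |(∑ x : Fin n → Bool, if eval h x = y then pX x else 0) / (Fintype.card H : ℝ) -
          (1 / (Fintype.card (Fin (m - 2 * k) → Bool) : ℝ)) * (1 / (Fintype.card H : ℝ))| ≤
      2 ^ (-(k : ℝ)) := by
  classical
  set c : ℝ := (Fintype.card (Fin (m - 2 * k) → Bool) : ℝ) with hc
  set N : ℝ := (Fintype.card H : ℝ) with hN
  have hcpos : (0:ℝ) < c := by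
    rw [hc]; exact_mod_cast Fintype.card_pos
  have hNpos : (0:ℝ) < N := by
    rw [hN]; exact_mod_cast Fintype.card_pos
  have hcval : c = 2 ^ (m - 2 * k) := by
    rw [hc]
    simp [Fintype.card_fun, Fintype.card_bool, Fintype.card_fin]
  have h2m : (2:ℝ) ^ (-(m:ℝ)) = ((2:ℝ) ^ m)⁻¹ := by
    rw [Real.rpow_neg (by norm_num), Real.rpow_natCast]
  have h2k : (2:ℝ) ^ (-(k:ℝ)) = ((2:ℝ) ^ k)⁻¹ := by
    rw [Real.rpow_neg (by norm_num), Real.rpow_natCast]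
  -- abbreviations
  set F : (Fin (m - 2 * k) → Bool) → H → ℝ := fun y h => ∑ x : Fin n → Bool, if eval h x = y then pX x else 0
    with hF
  set g : (Fin (m - 2 * k) → Bool) → H → ℝ := fun y h => F y h / N - 1/c * (1/N) with hg
  -- Step A : total mass
  have hA : ∑ y : Fin (m - 2 * k) → Bool, ∑ h : H, F y h = N := by
    rw [Finset.sum_comm]
    have : ∀ h : H, ∑ y : Fin (m - 2 * k) → Bool, F y h = 1 := by
      intro h
      rw [hF]
      rw [Finset.sum_comm]
      calc ∑ x : Fin n → Bool, ∑ y : Fin (m - 2 * k) → Bool, (if eval h x = y then pX x else 0)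
          = ∑ x : Fin n → Bool, pX x := by
            refine Finset.sum_congr rfl fun x _ => ?_
            simp [Finset.sum_ite_eq]
        _ = 1 := hsum
    simp [this, hN]
  -- collision counts
  set D : (Fin n → Bool) → (Fin n → Bool) → ℝ :=
    fun x1 x2 => ∑ y : Fin (m - 2 * k) → Bool, ∑ h : H, if eval h x1 = y ∧ eval h x2 = y then (1:ℝ) else 0
    with hD
  have hDdiag : ∀ x, D x x = N := by
    intro x
    rw [hD]
    simp only [and_self]
    rw [Finset.sum_comm]
    have : ∀ h : H, ∑ y : Fin (m - 2 * k) → Bool, (if eval h x = y then (1:ℝ) else 0) = 1 := by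
      intro h; simp [Finset.sum_ite_eq]
    simp [this, hN]
  have hDoff : ∀ x1 x2, x1 ≠ x2 → D x1 x2 = N / c := by
    intro x1 x2 hne
    have hcount : ∀ y : Fin (m - 2 * k) → Bool, ∑ h : H, (if eval h x1 = y ∧ eval h x2 = y then (1:ℝ) else 0)
        = N / c ^ 2 := by
      intro y
      have h1 : ∑ h : H, (if eval h x1 = y ∧ eval h x2 = y then (1:ℝ) else 0)
          = ((univ.filter fun h : H => eval h x1 = y ∧ eval h x2 = y).card : ℝ) := by
        simp [Finset.sum_boole]
      have h2 := hpair x1 x2 hne y y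
      rw [h1]
      have := h2
      field_simp at this ⊢
      linarith [this]
    rw [hD]
    simp only [hcount]
    rw [Finset.sum_const, Finset.card_univ, nsmul_eq_mul, ← hc]
    field_simp
  -- Step B : second moment
  have hB : ∑ y : Fin (m - 2 * k) → Bool, ∑ h : H, (F y h) ^ 2 ≤ N * 2 ^ (-(m:ℝ)) + N / c := by
    have expand : ∀ (y : Fin (m - 2 * k) → Bool) (h : H), (F y h) ^ 2 =
        ∑ x1 : Fin n → Bool, ∑ x2 : Fin n → Bool,
          if eval h x1 = y ∧ eval h x2 = y then pX x1 * pX x2 else 0 := by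
      intro y h
      rw [hF, sq, Finset.sum_mul_sum]
      refine Finset.sum_congr rfl fun x1 _ => Finset.sum_congr rfl fun x2 _ => ?_
      by_cases h1 : eval h x1 = y <;> by_cases h2 : eval h x2 = y <;> simp [h1, h2]
    have swap : ∑ y : Fin (m - 2 * k) → Bool, ∑ h : H, (F y h) ^ 2
        = ∑ x1 : Fin n → Bool, ∑ x2 : Fin n → Bool, pX x1 * pX x2 * D x1 x2 := by
      simp only [expand]
      rw [Finset.sum_comm]
      calc ∑ h : H, ∑ y : Fin (m - 2 * k) → Bool, ∑ x1, ∑ x2,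
              (if eval h x1 = y ∧ eval h x2 = y then pX x1 * pX x2 else 0)
          = ∑ h : H, ∑ x1, ∑ y : Fin (m - 2 * k) → Bool, ∑ x2,
              (if eval h x1 = y ∧ eval h x2 = y then pX x1 * pX x2 else 0) := by
            exact Finset.sum_congr rfl fun h _ => Finset.sum_comm
        _ = ∑ h : H, ∑ x1, ∑ x2, ∑ y : Fin (m - 2 * k) → Bool,
              (if eval h x1 = y ∧ eval h x2 = y then pX x1 * pX x2 else 0) := by
            exact Finset.sum_congr rfl fun h _ =>
              Finset.sum_congr rfl fun x1 _ => Finset.sum_comm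
        _ = ∑ x1, ∑ h : H, ∑ x2, ∑ y : Fin (m - 2 * k) → Bool,
              (if eval h x1 = y ∧ eval h x2 = y then pX x1 * pX x2 else 0) :=
            Finset.sum_comm
        _ = ∑ x1, ∑ x2, ∑ h : H, ∑ y : Fin (m - 2 * k) → Bool,
              (if eval h x1 = y ∧ eval h x2 = y then pX x1 * pX x2 else 0) := by
            exact Finset.sum_congr rfl fun x1 _ => Finset.sum_comm
        _ = ∑ x1, ∑ x2, ∑ y : Fin (m - 2 * k) → Bool, ∑ h : H,
              (if eval h x1 = y ∧ eval h x2 = y then pX x1 * pX x2 else 0) := by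
            exact Finset.sum_congr rfl fun x1 _ =>
              Finset.sum_congr rfl fun x2 _ => Finset.sum_comm
        _ = ∑ x1, ∑ x2, pX x1 * pX x2 * D x1 x2 := by
            refine Finset.sum_congr rfl fun x1 _ => Finset.sum_congr rfl fun x2 _ => ?_
            rw [hD, Finset.mul_sum]
            refine Finset.sum_congr rfl fun y _ => ?_
            rw [Finset.mul_sum]
            refine Finset.sum_congr rfl fun h _ => ?_
            rw [mul_boole]
    rw [swap]
    have split : ∀ x1 : Fin n → Bool,
        ∑ x2, pX x1 * pX x2 * D x1 x2
          = pX x1 * pX x1 * D x1 x1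
            + ∑ x2 ∈ univ.erase x1, pX x1 * pX x2 * D x1 x2 := by
      intro x1
      exact (Finset.add_sum_erase univ _ (Finset.mem_univ x1)).symm
    calc ∑ x1, ∑ x2, pX x1 * pX x2 * D x1 x2
        = ∑ x1, (pX x1 * pX x1 * D x1 x1
            + ∑ x2 ∈ univ.erase x1, pX x1 * pX x2 * D x1 x2) := by
          exact Finset.sum_congr rfl fun x1 _ => split x1
      _ = (∑ x1, pX x1 * pX x1 * N)
            + ∑ x1, ∑ x2 ∈ univ.erase x1, pX x1 * pX x2 * D x1 x2 := by
          rw [Finset.sum_add_distrib]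
          congr 1
          exact Finset.sum_congr rfl fun x1 _ => by rw [hDdiag]
      _ ≤ N * 2 ^ (-(m:ℝ)) + N / c := by
          have hdiag : (∑ x1, pX x1 * pX x1 * N) ≤ N * 2 ^ (-(m:ℝ)) := by
            have step1 : (∑ x1, pX x1 * pX x1 * N)
                ≤ ∑ x1, (2:ℝ) ^ (-(m:ℝ)) * pX x1 * N := by
              refine Finset.sum_le_sum fun x _ => ?_
              have h1 := hbound x
              have h2 := hpos x
              nlinarith [mul_nonneg (sub_nonneg.mpr h1) (mul_nonneg h2 hNpos.le)]
            have step2 : (∑ x1, (2:ℝ) ^ (-(m:ℝ)) * pX x1 * N) = N * 2 ^ (-(m:ℝ)) := by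
              rw [← Finset.sum_mul, ← Finset.mul_sum, hsum]; ring
            linarith
          have hoff : (∑ x1, ∑ x2 ∈ univ.erase x1, pX x1 * pX x2 * D x1 x2) ≤ N / c := by
            have step1 : (∑ x1, ∑ x2 ∈ univ.erase x1, pX x1 * pX x2 * D x1 x2)
                = ∑ x1, ∑ x2 ∈ univ.erase x1, pX x1 * pX x2 * (N / c) := by
              refine Finset.sum_congr rfl fun x1 _ =>
                Finset.sum_congr rfl fun x2 hx2 => ?_
              rw [hDoff x1 x2 (Finset.ne_of_mem_erase hx2).symm]
            have step2 : (∑ x1, ∑ x2 ∈ univ.erase x1, pX x1 * pX x2 * (N / c))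
                ≤ ∑ x1, ∑ x2, pX x1 * pX x2 * (N / c) := by
              refine Finset.sum_le_sum fun x1 _ => ?_
              refine Finset.sum_le_sum_of_subset_of_nonneg
                (Finset.erase_subset _ _) fun x2 _ _ => ?_
              have h1 := hpos x1; have h2 := hpos x2
              have hdiv : (0:ℝ) ≤ N / c := le_of_lt (div_pos hNpos hcpos)
              positivity
            have step3 : (∑ x1, ∑ x2, pX x1 * pX x2 * (N / c)) = N / c := by
              have hx : ∀ x1, (∑ x2, pX x1 * pX x2 * (N / c))
                  = pX x1 * (N / c) := by
                intro x1
                rw [← Finset.sum_mul, ← Finset.mul_sum, hsum]; ring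
              simp only [hx]
              rw [← Finset.sum_mul, hsum, one_mul]
            linarith
          linarith
  -- Step C : sum of squared deviations
  have hC : ∑ y : Fin (m - 2 * k) → Bool, ∑ h : H, (g y h) ^ 2 ≤ 2 ^ (-(m:ℝ)) / N := by
    have hterm : ∀ (y : Fin (m - 2 * k) → Bool) (h : H), (g y h) ^ 2
        = (F y h) ^ 2 * (1 / N ^ 2) - F y h * (2 / (c * N ^ 2)) + 1 / (c ^ 2 * N ^ 2) := by
      intro y h
      rw [hg]
      field_simp
      ring
    have hCeq : ∑ y : Fin (m - 2 * k) → Bool, ∑ h : H, (g y h) ^ 2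
        = (∑ y : Fin (m - 2 * k) → Bool, ∑ h : H, (F y h) ^ 2) * (1 / N ^ 2)
          - (∑ y : Fin (m - 2 * k) → Bool, ∑ h : H, F y h) * (2 / (c * N ^ 2))
          + c * (N * (1 / (c ^ 2 * N ^ 2))) := by
      simp only [hterm, Finset.sum_add_distrib, Finset.sum_sub_distrib,
        ← Finset.sum_mul, Finset.sum_const, Finset.card_univ, nsmul_eq_mul]
      rw [← hc, ← hN]
      ring
    rw [hCeq, hA]
    have h1 : (∑ y : Fin (m - 2 * k) → Bool, ∑ h : H, (F y h) ^ 2) * (1 / N ^ 2)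
        ≤ (N * 2 ^ (-(m:ℝ)) + N / c) * (1 / N ^ 2) := by
      exact mul_le_mul_of_nonneg_right hB (by positivity)
    have heq : (N * 2 ^ (-(m:ℝ)) + N / c) * (1 / N ^ 2)
        - N * (2 / (c * N ^ 2)) + c * (N * (1 / (c ^ 2 * N ^ 2)))
        = 2 ^ (-(m:ℝ)) / N := by
      field_simp
      ring
    linarith [h1]
  -- Step D : Cauchy–Schwarz
  have hCS : (∑ y : Fin (m - 2 * k) → Bool, ∑ h : H, |g y h|) ^ 2
      ≤ (c * N) * ∑ y : Fin (m - 2 * k) → Bool, ∑ h : H, (g y h) ^ 2 := by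
    have key := Finset.sum_mul_sq_le_sq_mul_sq (Finset.univ : Finset ((Fin (m - 2 * k) → Bool) × H))
      (fun _ => (1:ℝ)) (fun p => |g p.1 p.2|)
    simp only [one_pow, one_mul, sq_abs] at key
    have e1 : ∑ p : (Fin (m - 2 * k) → Bool) × H, |g p.1 p.2| = ∑ y : Fin (m - 2 * k) → Bool, ∑ h : H, |g y h| :=
      Fintype.sum_prod_type _
    have e2 : ∑ p : (Fin (m - 2 * k) → Bool) × H, (g p.1 p.2) ^ 2 = ∑ y : Fin (m - 2 * k) → Bool, ∑ h : H, (g y h) ^ 2 :=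
      Fintype.sum_prod_type _
    have e3 : ∑ _p : (Fin (m - 2 * k) → Bool) × H, (1:ℝ) = c * N := by
      rw [Finset.sum_const, Finset.card_univ, nsmul_eq_mul, Fintype.card_prod]
      push_cast
      rw [← hc, ← hN]; ring
    rw [e1, e2, e3] at key
    exact key
  -- combine
  have hsq : (∑ y : Fin (m - 2 * k) → Bool, ∑ h : H, |g y h|) ^ 2 ≤ ((2:ℝ) ^ (-(k:ℝ))) ^ 2 := by
    have h1 : (c * N) * ∑ y : Fin (m - 2 * k) → Bool, ∑ h : H, (g y h) ^ 2
        ≤ (c * N) * (2 ^ (-(m:ℝ)) / N) := by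
      exact mul_le_mul_of_nonneg_left hC (by positivity)
    have h2 : (c * N) * (2 ^ (-(m:ℝ)) / N) = ((2:ℝ) ^ (-(k:ℝ))) ^ 2 := by
      rw [h2m, h2k, hcval]
      have hexp : m - 2 * k + k * 2 = m := by omega
      have hpow : (2:ℝ) ^ (m - 2 * k) * (2:ℝ) ^ (k * 2) = 2 ^ m := by
        rw [← pow_add, hexp]
      have hNne : N ≠ 0 := ne_of_gt hNpos
      field_simp
      linear_combination hpow
    calc (∑ y : Fin (m - 2 * k) → Bool, ∑ h : H, |g y h|) ^ 2
        ≤ (c * N) * ∑ y : Fin (m - 2 * k) → Bool, ∑ h : H, (g y h) ^ 2 := hCS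
      _ ≤ (c * N) * (2 ^ (-(m:ℝ)) / N) := h1
      _ = ((2:ℝ) ^ (-(k:ℝ))) ^ 2 := h2
  have habs_nonneg : (0:ℝ) ≤ ∑ y : Fin (m - 2 * k) → Bool, ∑ h : H, |g y h| := by
    refine Finset.sum_nonneg fun y _ => Finset.sum_nonneg fun h _ => abs_nonneg _
  have h2kpos : (0:ℝ) ≤ (2:ℝ) ^ (-(k:ℝ)) := by positivity
  have hfin : ∑ y : Fin (m - 2 * k) → Bool, ∑ h : H, |g y h| ≤ (2:ℝ) ^ (-(k:ℝ)) := by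
    nlinarith [hsq, habs_nonneg, h2kpos]
  calc (1 / 2) * ∑ y : Fin (m - 2 * k) → Bool, ∑ h : H,
        |F y h / N - 1/c * (1/N)|
      ≤ ∑ y : Fin (m - 2 * k) → Bool, ∑ h : H, |g y h| := by
        rw [hg]
        simp only []
        linarith [habs_nonneg]
    _ ≤ (2:ℝ) ^ (-(k:ℝ)) := hfin
end
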